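/- Let x̂, ẑ ∈ ℝ³ be orthonormal vectors, and let (p_m, k_m, n_m)_m be a finite family with p_m ≥ 0, Σ_m p_m = 1, k_m ∈ [−1,1], and n_m ∈ ℝ³ unit vectors. For each m set r_m = (n_m·x̂)·n_m + √(1 − k_m²)·(x̂ − (n_m·x̂)·n_m). Then Σ_m p_m·h(|k_m·(n_m·ẑ)|) ≥ h(√(1 − (Σ_m p_m·‖r_m‖)²)). -/

import Mathlib

open Matrix
open scoped ComplexOrder

noncomputable section

/-- The binary-entropy-type function `h(x) = -((1+x)/2)·log₂((1+x)/2) - ((1-x)/2)·log₂((1-x)/2)`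
(with the convention `0·log₂ 0 = 0`, automatic since `Real.logb 2 0 = 0`). -/
def hFun (x : ℝ) : ℝ :=
  -(((1 + x) / 2) * Real.logb 2 ((1 + x) / 2)) - ((1 - x) / 2) * Real.logb 2 ((1 - x) / 2)

/-- `g : [0,1] → [0,1]` is the inverse of `h` on `[0,1]`. -/
def gFun : ℝ → ℝ := Function.invFunOn hFun (Set.Icc 0 1)

/-- The (real) quadratic form `⟨v|M|v⟩`. -/
def qform {d : ℕ} (M : Matrix (Fin d) (Fin d) ℂ) (v : Fin d → ℂ) : ℝ :=
  (star v ⬝ᵥ M.mulVec v).re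

/-- `v` is an orthonormal basis (family) of `ℂ^d`. -/
def IsONB {d : ℕ} (v : Fin d → Fin d → ℂ) : Prop :=
  ∀ i j, star (v i) ⬝ᵥ v j = if i = j then 1 else 0

/-- A POVM: a finite family of positive semidefinite matrices summing to the identity. -/
def IsPOVM {d : ℕ} {ι : Type*} [Fintype ι] (M : ι → Matrix (Fin d) (Fin d) ℂ) : Prop :=
  (∀ m, (M m).PosSemidef) ∧ ∑ m, M m = 1

/-- A density matrix: positive semidefinite with trace 1. -/
def IsDensity {d : ℕ} (ρ : Matrix (Fin d) (Fin d) ℂ) : Prop :=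
  ρ.PosSemidef ∧ ρ.trace = 1

/-- The noise `N(M,A) = -Σ_{m,a} p(m,a)·log₂(p(m,a)/p(m))` with `p(m,a) = (1/d)·⟨a|M_m|a⟩`
and `p(m) = (1/d)·Tr[M_m]`, for an observable `A` with orthonormal eigenbasis `v`. -/
def noise {d : ℕ} {ι : Type*} [Fintype ι] (M : ι → Matrix (Fin d) (Fin d) ℂ)
    (v : Fin d → Fin d → ℂ) : ℝ :=
  -∑ m, ∑ a, ((1 / (d : ℝ)) * qform (M m) (v a)) *
      Real.logb 2 (((1 / (d : ℝ)) * qform (M m) (v a)) / ((1 / (d : ℝ)) * (M m).trace.re))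

/-- `H(A|ρ) = -Σ_a ⟨a|ρ|a⟩·log₂⟨a|ρ|a⟩` for an observable with orthonormal eigenbasis `v`. -/
def Hobs {d : ℕ} (v : Fin d → Fin d → ℂ) (ρ : Matrix (Fin d) (Fin d) ℂ) : ℝ :=
  -∑ a, qform ρ (v a) * Real.logb 2 (qform ρ (v a))

/-- Conditional Shannon entropy `H(X|Y) = -Σ_{x,y} p(x,y)·log₂(p(x,y)/p(y))` of a finite joint
distribution, conditioning on the second variable. -/
def condEnt {X Y : Type*} [Fintype X] [Fintype Y] (p : X → Y → ℝ) : ℝ :=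
  -∑ x, ∑ y, p x y * Real.logb 2 (p x y / ∑ x', p x' y)

/-- Pauli matrix σ_x. -/
def σx : Matrix (Fin 2) (Fin 2) ℂ := !![0, 1; 1, 0]
/-- Pauli matrix σ_y. -/
def σy : Matrix (Fin 2) (Fin 2) ℂ := !![0, -Complex.I; Complex.I, 0]
/-- Pauli matrix σ_z. -/
def σz : Matrix (Fin 2) (Fin 2) ℂ := !![1, 0; 0, -1]

/-- `v·σ = v₁σ_x + v₂σ_y + v₃σ_z` for `v ∈ ℝ³`. -/
def vecσ (v : Fin 3 → ℝ) : Matrix (Fin 2) (Fin 2) ℂ :=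
  (v 0 : ℂ) • σx + (v 1 : ℂ) • σy + (v 2 : ℂ) • σz

/-- The canonical orthonormal eigenbasis of σ_z. -/
def basisZ : Fin 2 → Fin 2 → ℂ := fun i j => if i = j then 1 else 0

/-- The canonical orthonormal eigenbasis `|±x⟩` of σ_x. -/
def basisX : Fin 2 → Fin 2 → ℂ := fun i =>
  ![((1 / Real.sqrt 2 : ℝ) : ℂ),
    if i = 0 then ((1 / Real.sqrt 2 : ℝ) : ℂ) else (-(1 / Real.sqrt 2 : ℝ) : ℂ)]

/-- Eigenvalues `+1, -1` of a (nondegenerate) Pauli observable. -/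
def pmEig : Fin 2 → ℂ := fun i => if i = 0 then 1 else -1

end

noncomputable section AuxStmt17

private lemma hFun_eq' (x : ℝ) : hFun x =
    (-(((1 + x) / 2) * Real.log ((1 + x) / 2)) - ((1 - x) / 2) * Real.log ((1 - x) / 2)) /
      Real.log 2 := by
  unfold hFun Real.logb
  ring

private lemma continuous_hFun : Continuous hFun := by
  have h : hFun = fun x => (-(((1 + x) / 2) * Real.log ((1 + x) / 2)) -
      ((1 - x) / 2) * Real.log ((1 - x) / 2)) / Real.log 2 := funext hFun_eq'
  rw [h]
  have c1 : Continuous fun x : ℝ => ((1 + x) / 2) * Real.log ((1 + x) / 2) :=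
    Real.continuous_mul_log.comp (by continuity)
  have c2 : Continuous fun x : ℝ => ((1 - x) / 2) * Real.log ((1 - x) / 2) :=
    Real.continuous_mul_log.comp (by continuity)
  exact (c1.neg.sub c2).div_const _

private lemma log_two_pos' : (0:ℝ) < Real.log 2 := Real.log_pos one_lt_two

private lemma hasDerivAt_hFun {x : ℝ} (h1 : -1 < x) (h2 : x < 1) :
    HasDerivAt hFun ((Real.log ((1 - x) / 2) - Real.log ((1 + x) / 2)) / (2 * Real.log 2)) x := by
  have hpa : (0:ℝ) < (1 + x) / 2 := by linarith
  have hpb : (0:ℝ) < (1 - x) / 2 := by linarith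
  have ha : HasDerivAt (fun y : ℝ => (1 + y) / 2) (1 / 2) x := by
    simpa using (((hasDerivAt_id x).const_add (1:ℝ)).div_const 2)
  have hb : HasDerivAt (fun y : ℝ => (1 - y) / 2) (-(1 / 2)) x := by
    have := (((hasDerivAt_id x).const_sub (1:ℝ)).div_const 2)
    exact this.congr_deriv (by norm_num)
  have hu : HasDerivAt (fun y : ℝ => y * Real.log y) (Real.log ((1 + x) / 2) + 1) ((1 + x) / 2) :=
    Real.hasDerivAt_mul_log hpa.ne'
  have hv : HasDerivAt (fun y : ℝ => y * Real.log y) (Real.log ((1 - x) / 2) + 1) ((1 - x) / 2) :=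
    Real.hasDerivAt_mul_log hpb.ne'
  have hA : HasDerivAt (fun y : ℝ => ((1 + y) / 2) * Real.log ((1 + y) / 2))
      ((Real.log ((1 + x) / 2) + 1) * (1 / 2)) x := by
    simpa [Function.comp_def] using hu.comp x ha
  have hB : HasDerivAt (fun y : ℝ => ((1 - y) / 2) * Real.log ((1 - y) / 2))
      ((Real.log ((1 - x) / 2) + 1) * (-(1 / 2))) x := by
    simpa [Function.comp_def] using hv.comp x hb
  have hh := (hA.neg.sub hB).div_const (Real.log 2)
  have heq : hFun = fun y => (-(((1 + y) / 2) * Real.log ((1 + y) / 2)) -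
      ((1 - y) / 2) * Real.log ((1 - y) / 2)) / Real.log 2 := funext hFun_eq'
  rw [heq]
  refine hh.congr_deriv ?_
  have hl2 := log_two_pos'.ne'
  field_simp
  ring

private lemma hFun_anti : AntitoneOn hFun (Set.Icc (0:ℝ) 1) := by
  apply antitoneOn_of_deriv_nonpos (convex_Icc 0 1) continuous_hFun.continuousOn
  · rw [interior_Icc]
    intro x hx
    exact (hasDerivAt_hFun (by linarith [hx.1]) hx.2).differentiableAt.differentiableWithinAt
  · rw [interior_Icc]
    intro x hx
    rw [(hasDerivAt_hFun (by linarith [hx.1]) hx.2).deriv]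
    apply div_nonpos_of_nonpos_of_nonneg
    · have hlog : Real.log ((1 - x) / 2) ≤ Real.log ((1 + x) / 2) :=
        Real.log_le_log (by linarith [hx.2]) (by linarith [hx.1])
      linarith
    · linarith [log_two_pos']

/-- `f(t) = h(√(1-t²))`. -/
private def fD (t : ℝ) : ℝ := hFun (Real.sqrt (1 - t ^ 2))

private def fD' (t : ℝ) : ℝ :=
  (t / Real.sqrt (1 - t ^ 2)) * (Real.log (1 + Real.sqrt (1 - t ^ 2)) - Real.log t) / Real.log 2

private def fD'' (t : ℝ) : ℝ :=
  ((Real.log (1 + Real.sqrt (1 - t ^ 2)) - Real.log t) / Real.sqrt (1 - t ^ 2) ^ 3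
    - t ^ 2 / (Real.sqrt (1 - t ^ 2) ^ 2 * (1 + Real.sqrt (1 - t ^ 2)))
    - 1 / Real.sqrt (1 - t ^ 2)) / Real.log 2

private lemma continuous_fD : Continuous fD :=
  continuous_hFun.comp (Real.continuous_sqrt.comp (continuous_const.sub (continuous_pow 2)))

private lemma hasDerivAt_sqrt_one_sub_sq {t : ℝ} (ht : t ∈ Set.Ioo (0:ℝ) 1) :
    HasDerivAt (fun y : ℝ => Real.sqrt (1 - y ^ 2)) (-t / Real.sqrt (1 - t ^ 2)) t := by
  have h0 : (0:ℝ) < 1 - t ^ 2 := by nlinarith [ht.1, ht.2]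
  have hg : HasDerivAt (fun y : ℝ => 1 - y ^ 2) (-(2 * t)) t := by
    simpa using ((hasDerivAt_pow 2 t).const_sub 1)
  have hs := (Real.hasDerivAt_sqrt h0.ne').comp t hg
  have hx0 : (0:ℝ) < Real.sqrt (1 - t ^ 2) := Real.sqrt_pos.2 h0
  refine hs.congr_deriv ?_
  field_simp

private lemma hasDerivAt_fD {t : ℝ} (ht : t ∈ Set.Ioo (0:ℝ) 1) :
    HasDerivAt fD (fD' t) t := by
  have h0 : (0:ℝ) < 1 - t ^ 2 := by nlinarith [ht.1, ht.2]
  set x := Real.sqrt (1 - t ^ 2) with hxdef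
  have hx0 : (0:ℝ) < x := Real.sqrt_pos.2 h0
  have hx2 : x ^ 2 = 1 - t ^ 2 := Real.sq_sqrt h0.le
  have hx1 : x < 1 := by nlinarith [ht.1, ht.2]
  have hsq := hasDerivAt_sqrt_one_sub_sq ht
  have hD := (hasDerivAt_hFun (by linarith : (-1:ℝ) < x) hx1).comp t hsq
  have hfd : fD = hFun ∘ fun y : ℝ => Real.sqrt (1 - y ^ 2) := rfl
  rw [← hfd] at hD
  refine hD.congr_deriv ?_
  have hlog1 : Real.log ((1 + x) / 2) = Real.log (1 + x) - Real.log 2 :=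
    Real.log_div (by linarith) two_ne_zero
  have h1mx : (1:ℝ) - x = t ^ 2 / (1 + x) := by
    rw [eq_div_iff (by linarith : (1:ℝ) + x ≠ 0)]
    nlinarith [hx2]
  have hlog3 : Real.log (1 - x) = 2 * Real.log t - Real.log (1 + x) := by
    rw [h1mx, Real.log_div (pow_ne_zero 2 ht.1.ne') (by linarith), Real.log_pow]
    push_cast
    ring
  have hlog2 : Real.log ((1 - x) / 2) = 2 * Real.log t - Real.log (1 + x) - Real.log 2 := by
    rw [Real.log_div (by linarith : (1:ℝ) - x ≠ 0) two_ne_zero, hlog3]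
  rw [fD', hlog1, hlog2]
  have hl2 := log_two_pos'.ne'
  field_simp
  ring

private lemma hasDerivAt_fD' {t : ℝ} (ht : t ∈ Set.Ioo (0:ℝ) 1) :
    HasDerivAt fD' (fD'' t) t := by
  have h0 : (0:ℝ) < 1 - t ^ 2 := by nlinarith [ht.1, ht.2]
  set x := Real.sqrt (1 - t ^ 2) with hxdef
  have hx0 : (0:ℝ) < x := Real.sqrt_pos.2 h0
  have hx2 : x ^ 2 = 1 - t ^ 2 := Real.sq_sqrt h0.le
  have hsq := hasDerivAt_sqrt_one_sub_sq ht
  have hA : HasDerivAt (fun y : ℝ => y / Real.sqrt (1 - y ^ 2))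
      ((1 * x - t * (-t / x)) / x ^ 2) t := (hasDerivAt_id t).div hsq hx0.ne'
  have hA' : HasDerivAt (fun y : ℝ => y / Real.sqrt (1 - y ^ 2)) (1 / x ^ 3) t := by
    convert hA using 1
    field_simp
    linear_combination (-1) * hx2
  have hL1 : HasDerivAt (fun y : ℝ => Real.log (1 + Real.sqrt (1 - y ^ 2)))
      ((1 + x)⁻¹ * (-t / x)) t := by
    have hinner : HasDerivAt (fun y : ℝ => 1 + Real.sqrt (1 - y ^ 2)) (-t / x) t :=
      hsq.const_add 1
    simpa [Function.comp_def] using (Real.hasDerivAt_log (by linarith : (1:ℝ) + x ≠ 0)).comp t hinner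
  have hL2 : HasDerivAt Real.log t⁻¹ t := Real.hasDerivAt_log ht.1.ne'
  have hB : HasDerivAt (fun y : ℝ => Real.log (1 + Real.sqrt (1 - y ^ 2)) - Real.log y)
      ((1 + x)⁻¹ * (-t / x) - t⁻¹) t := hL1.sub hL2
  have hh := (hA'.mul hB).div_const (Real.log 2)
  have : fD' = fun y : ℝ =>
      (y / Real.sqrt (1 - y ^ 2)) * (Real.log (1 + Real.sqrt (1 - y ^ 2)) - Real.log y) /
        Real.log 2 := rfl
  rw [this]
  refine hh.congr_deriv ?_
  rw [fD'']
  have hl2 := log_two_pos'.ne'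
  have ht' : t ≠ 0 := ht.1.ne'
  have hx' : x ≠ 0 := hx0.ne'
  have h1x : (1:ℝ) + x ≠ 0 := by linarith
  rw [← hxdef]
  field_simp
  ring

private lemma key_exp {x : ℝ} (hx : 0 ≤ x) : (1 - x) * Real.exp (2 * x) ≤ 1 + x := by
  have mono : MonotoneOn (fun t : ℝ => (1 + t) - (1 - t) * Real.exp (2 * t)) (Set.Ici 0) := by
    apply monotoneOn_of_deriv_nonneg (convex_Ici 0)
    · fun_prop
    · intro t ht
      apply DifferentiableAt.differentiableWithinAt
      fun_prop
    · intro t ht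
      rw [interior_Ici] at ht
      have he : HasDerivAt (fun t : ℝ => Real.exp (2 * t)) (Real.exp (2 * t) * 2) t := by
        simpa [Function.comp_def] using (Real.hasDerivAt_exp (2 * t)).comp t
          ((hasDerivAt_id t).const_mul 2)
      have hd : HasDerivAt (fun t : ℝ => (1 + t) - (1 - t) * Real.exp (2 * t))
          (1 - ((-1) * Real.exp (2 * t) + (1 - t) * (Real.exp (2 * t) * 2))) t := by
        have h1 : HasDerivAt (fun t : ℝ => (1:ℝ) + t) 1 t := by
          simpa using (hasDerivAt_id t).const_add (1:ℝ)
        have h2 : HasDerivAt (fun t : ℝ => (1 - t) * Real.exp (2 * t))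
            ((-1) * Real.exp (2 * t) + (1 - t) * (Real.exp (2 * t) * 2)) t := by
          have h3 : HasDerivAt (fun t : ℝ => (1:ℝ) - t) (-1) t := by
            simpa using (hasDerivAt_id t).const_sub (1:ℝ)
          exact h3.mul he
        exact h1.sub h2
      rw [hd.deriv]
      have h1 := Real.add_one_le_exp (-(2 * t))
      have h2 : Real.exp (-(2 * t)) * Real.exp (2 * t) = 1 := by
        rw [← Real.exp_add]; simp
      nlinarith [Real.exp_pos (2 * t), mul_nonneg (sub_nonneg.2 h1) (Real.exp_pos (2 * t)).le]
  have h := mono Set.self_mem_Ici (Set.mem_Ici.2 hx) hx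
  norm_num at h
  nlinarith [h]

private lemma log_ratio {x : ℝ} (h0 : 0 ≤ x) (h1 : x < 1) :
    2 * x ≤ Real.log (1 + x) - Real.log (1 - x) := by
  have hpos : (0:ℝ) < 1 - x := by linarith
  have h2 : Real.exp (2 * x) ≤ (1 + x) / (1 - x) := by
    rw [le_div_iff₀ hpos]
    have := key_exp h0
    nlinarith [this]
  have := (Real.le_log_iff_exp_le (by positivity : (0:ℝ) < (1 + x) / (1 - x))).2 h2
  rwa [Real.log_div (by linarith) hpos.ne'] at this

private lemma fD''_nonneg {t : ℝ} (ht : t ∈ Set.Ioo (0:ℝ) 1) : 0 ≤ fD'' t := by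
  have h0 : (0:ℝ) < 1 - t ^ 2 := by nlinarith [ht.1, ht.2]
  set x := Real.sqrt (1 - t ^ 2) with hxdef
  have hx0 : (0:ℝ) < x := Real.sqrt_pos.2 h0
  have hx2 : x ^ 2 = 1 - t ^ 2 := Real.sq_sqrt h0.le
  have hx1 : x < 1 := by nlinarith [ht.1, ht.2]
  set B := Real.log (1 + x) - Real.log t with hBdef
  have hBx : x ≤ B := by
    have ht2 : t ^ 2 = (1 - x) * (1 + x) := by linear_combination hx2
    have hlt : 2 * Real.log t = Real.log (1 - x) + Real.log (1 + x) := by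
      have : Real.log (t ^ 2) = Real.log ((1 - x) * (1 + x)) := by rw [ht2]
      rw [Real.log_pow, Real.log_mul (by linarith : (1:ℝ) - x ≠ 0) (by linarith)] at this
      push_cast at this
      linarith [this]
    have := log_ratio hx0.le hx1
    rw [hBdef]
    linarith
  have heq : fD'' t = ((B - x) / x ^ 3 + (x / x ^ 3 - t ^ 2 / (x ^ 2 * (1 + x)) - 1 / x))
      / Real.log 2 := by
    rw [fD'', ← hxdef, hBdef]
    ring
  have hz : x / x ^ 3 - t ^ 2 / (x ^ 2 * (1 + x)) - 1 / x = 0 := by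
    field_simp
    linear_combination (-1) * hx2
  rw [heq, hz, add_zero]
  exact div_nonneg (div_nonneg (by linarith) (by positivity)) log_two_pos'.le

private lemma fD_convex : ConvexOn ℝ (Set.Icc (0:ℝ) 1) fD := by
  refine convexOn_of_hasDerivWithinAt2_nonneg (f' := fD') (f'' := fD'') (convex_Icc 0 1)
    continuous_fD.continuousOn ?_ ?_ ?_ <;> rw [interior_Icc]
  · intro t ht; exact (hasDerivAt_fD ht).hasDerivWithinAt
  · intro t ht; exact (hasDerivAt_fD' ht).hasDerivWithinAt
  · intro t ht; exact fD''_nonneg ht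

end AuxStmt17

/-- For orthonormal `x̂, ẑ ∈ ℝ³` and a finite family `(p_m, k_m, n_m)` with
`r_m = (n_m·x̂)n_m + √(1−k_m²)(x̂ − (n_m·x̂)n_m)`, one has
`Σ_m p_m·h(|k_m·(n_m·ẑ)|) ≥ h(√(1 − (Σ_m p_m·‖r_m‖)²))`. -/
theorem stmt_17 {ι : Type*} [Fintype ι] (xh zh : Fin 3 → ℝ)
    (hx : ∑ i, xh i ^ 2 = 1) (hz : ∑ i, zh i ^ 2 = 1) (hxz : ∑ i, xh i * zh i = 0)
    (p k : ι → ℝ) (n : ι → Fin 3 → ℝ)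
    (hp : ∀ m, 0 ≤ p m) (hpsum : ∑ m, p m = 1)
    (hk : ∀ m, k m ∈ Set.Icc (-1 : ℝ) 1) (hn : ∀ m, ∑ i, n m i ^ 2 = 1)
    (r : ι → Fin 3 → ℝ)
    (hr : ∀ m, r m = (∑ i, n m i * xh i) • n m +
        Real.sqrt (1 - k m ^ 2) • (xh - (∑ i, n m i * xh i) • n m)) :
    hFun (Real.sqrt (1 - (∑ m, p m * Real.sqrt (∑ i, r m i ^ 2)) ^ 2)) ≤
      ∑ m, p m * hFun |k m * ∑ i, n m i * zh i| := by
  classical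
  have hk2 : ∀ m, k m ^ 2 ≤ 1 := by
    intro m
    have h := hk m
    rw [Set.mem_Icc] at h
    nlinarith [h.1, h.2]
  -- Bessel inequality: (n·x̂)² + (n·ẑ)² ≤ 1
  have hbes : ∀ m, (∑ i, n m i * xh i) ^ 2 + (∑ i, n m i * zh i) ^ 2 ≤ 1 := by
    intro m
    have key : (0:ℝ) ≤ ∑ i, (n m i - (∑ j, n m j * xh j) * xh i
        - (∑ j, n m j * zh j) * zh i) ^ 2 := Finset.sum_nonneg fun i _ => sq_nonneg _
    have expand : ∑ i, (n m i - (∑ j, n m j * xh j) * xh i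
          - (∑ j, n m j * zh j) * zh i) ^ 2
        = (∑ i, n m i ^ 2) + (∑ j, n m j * xh j) ^ 2 * (∑ i, xh i ^ 2)
          + (∑ j, n m j * zh j) ^ 2 * (∑ i, zh i ^ 2)
          - 2 * (∑ j, n m j * xh j) * (∑ i, n m i * xh i)
          - 2 * (∑ j, n m j * zh j) * (∑ i, n m i * zh i)
          + 2 * (∑ j, n m j * xh j) * (∑ j, n m j * zh j) * (∑ i, xh i * zh i) := by
      simp only [Fin.sum_univ_three]
      ring
    rw [expand, hn m, hx, hz, hxz] at key
    nlinarith [key]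
  -- the squared norm of r m
  have hrs : ∀ m, ∑ i, r m i ^ 2 = 1 - k m ^ 2 * (1 - (∑ i, n m i * xh i) ^ 2) := by
    intro m
    have hs2 : Real.sqrt (1 - k m ^ 2) ^ 2 = 1 - k m ^ 2 :=
      Real.sq_sqrt (by linarith [hk2 m])
    have hx3 : xh 0 ^ 2 + xh 1 ^ 2 + xh 2 ^ 2 = 1 := by
      simpa [Fin.sum_univ_three] using hx
    have hn3 : n m 0 ^ 2 + n m 1 ^ 2 + n m 2 ^ 2 = 1 := by
      simpa [Fin.sum_univ_three] using hn m
    rw [hr m]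
    simp only [Pi.add_apply, Pi.smul_apply, Pi.sub_apply, smul_eq_mul, Fin.sum_univ_three]
    linear_combination (Real.sqrt (1 - k m ^ 2) ^ 2) * hx3
      + ((n m 0 * xh 0 + n m 1 * xh 1 + n m 2 * xh 2) ^ 2
          * (1 - Real.sqrt (1 - k m ^ 2)) ^ 2) * hn3
      + (1 - (n m 0 * xh 0 + n m 1 * xh 1 + n m 2 * xh 2) ^ 2) * hs2
  -- per-term bound: ‖r m‖ ≤ √(1 - (k m (n·ẑ))²)
  have hts : ∀ m, Real.sqrt (∑ i, r m i ^ 2)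
      ≤ Real.sqrt (1 - (k m * ∑ i, n m i * zh i) ^ 2) := by
    intro m
    apply Real.sqrt_le_sqrt
    rw [hrs m]
    have h1 : (0:ℝ) ≤ (k m) ^ 2 * (1 - (∑ i, n m i * xh i) ^ 2 - (∑ i, n m i * zh i) ^ 2) :=
      mul_nonneg (sq_nonneg _) (by linarith [hbes m])
    nlinarith [h1]
  have hkz1 : ∀ m, (k m * ∑ i, n m i * zh i) ^ 2 ≤ 1 := by
    intro m
    have h := hbes m
    have h2 := hk2 m
    nlinarith [sq_nonneg (∑ i, n m i * xh i), sq_nonneg (∑ i, n m i * zh i), sq_nonneg (k m)]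
  set tf : ι → ℝ := fun m => Real.sqrt (1 - (k m * ∑ i, n m i * zh i) ^ 2) with htf
  have ht0 : ∀ m, 0 ≤ tf m := fun m => Real.sqrt_nonneg _
  have ht1 : ∀ m, tf m ≤ 1 := fun m =>
    Real.sqrt_le_one.2 (by nlinarith [sq_nonneg (k m * ∑ i, n m i * zh i)])
  have htsq : ∀ m, tf m ^ 2 = 1 - (k m * ∑ i, n m i * zh i) ^ 2 := fun m =>
    Real.sq_sqrt (by linarith [hkz1 m])
  have hJ := fD_convex.map_sum_le (t := Finset.univ) (w := p) (p := tf)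
    (fun m _ => hp m) hpsum (fun m _ => ⟨ht0 m, ht1 m⟩)
  simp only [smul_eq_mul] at hJ
  have hfd_t : ∀ m, fD (tf m) = hFun |k m * ∑ i, n m i * zh i| := by
    intro m
    have harg : (1:ℝ) - tf m ^ 2 = (k m * ∑ i, n m i * zh i) ^ 2 := by
      rw [htsq m]; ring
    show hFun (Real.sqrt (1 - tf m ^ 2)) = _
    rw [harg, Real.sqrt_sq_eq_abs]
  have hS0 : 0 ≤ ∑ m, p m * Real.sqrt (∑ i, r m i ^ 2) :=
    Finset.sum_nonneg fun m _ => mul_nonneg (hp m) (Real.sqrt_nonneg _)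
  have hST : (∑ m, p m * Real.sqrt (∑ i, r m i ^ 2)) ≤ ∑ m, p m * tf m :=
    Finset.sum_le_sum fun m _ => mul_le_mul_of_nonneg_left (hts m) (hp m)
  have hT1 : (∑ m, p m * tf m) ≤ 1 := by
    calc ∑ m, p m * tf m ≤ ∑ m, p m * 1 :=
          Finset.sum_le_sum fun m _ => mul_le_mul_of_nonneg_left (ht1 m) (hp m)
      _ = 1 := by simpa using hpsum
  have hT0 : 0 ≤ ∑ m, p m * tf m := le_trans hS0 hST
  set S := ∑ m, p m * Real.sqrt (∑ i, r m i ^ 2) with hSdef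
  set T := ∑ m, p m * tf m with hTdef
  have hmono : hFun (Real.sqrt (1 - S ^ 2)) ≤ hFun (Real.sqrt (1 - T ^ 2)) := by
    apply hFun_anti
    · exact ⟨Real.sqrt_nonneg _, Real.sqrt_le_one.2 (by nlinarith [hT0])⟩
    · exact ⟨Real.sqrt_nonneg _, Real.sqrt_le_one.2 (by nlinarith [hS0])⟩
    · exact Real.sqrt_le_sqrt (by nlinarith [hS0, hST, hT0])
  have hfT : hFun (Real.sqrt (1 - T ^ 2)) = fD T := rfl
  calc hFun (Real.sqrt (1 - S ^ 2)) ≤ fD T := by rw [← hfT]; exact hmono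
    _ ≤ ∑ m, p m * fD (tf m) := hJ
    _ = ∑ m, p m * hFun |k m * ∑ i, n m i * zh i| :=
        Finset.sum_congr rfl fun m _ => by rw [hfd_t m]
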